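/- Let n be a positive odd integer and let a_0, a_1, ..., a_{n-1} be elements of a commutative ring (polynomials in q) such that a_k ≡ -a_{(n-1)/2-k} (mod Φ_n(q)) for 0 ≤ k ≤ (n-1)/2 and a_k ≡ -a_{(3n-1)/2-k} (mod Φ_n(q)) for (n+1)/2 ≤ k ≤ n-1. Then the double sum ∑_{i+j ≤ n-1} a_i a_j ≡ 0 (mod Φ_n(q)). -/

import Mathlib

open Finset

private lemma half_zero' {R : Type*} [AddCommGroup R] [Module ℚ R] (x : R)
    (h : x + x = 0) : x = 0 := by
  have h2 : (2:ℚ) • x = 0 := by rw [two_smul]; exact h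
  calc x = (2⁻¹:ℚ) • ((2:ℚ) • x) := by rw [smul_smul]; norm_num
  _ = 0 := by rw [h2, smul_zero]

private lemma main_lemma' {R : Type*} [CommRing R] [Module ℚ R] (m : ℕ) (b : ℕ → R)
    (hb1 : ∀ k ≤ m, b k + b (m - k) = 0)
    (hb2 : ∀ s < m, b (m + 1 + s) + b (2 * m - s) = 0) :
    ∑ i ∈ range (2*m+1), ∑ j ∈ range (2*m+1-i), b i * b j = 0 := by
  set c : ℕ → R := fun s => b (m + 1 + s) with hc_def
  have hc : ∀ s < m, c s + c (m - 1 - s) = 0 := by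
    intro s hs
    have h := hb2 s hs
    have e : 2 * m - s = m + 1 + (m - 1 - s) := by omega
    rw [e] at h
    exact h
  have hU : ∑ k ∈ range (m+1), b k = 0 := by
    apply half_zero'
    nth_rewrite 2 [← Finset.sum_range_reflect]
    rw [← Finset.sum_add_distrib]
    apply Finset.sum_eq_zero
    intro k hk
    have hk' : k ≤ m := by have := mem_range.mp hk; omega
    have e : m + 1 - 1 - k = m - k := by omega
    rw [e]
    exact hb1 k hk'
  have hW : ∑ s ∈ range m, c s = 0 := by
    apply half_zero'
    nth_rewrite 2 [← Finset.sum_range_reflect]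
    rw [← Finset.sum_add_distrib]
    apply Finset.sum_eq_zero
    intro s hs
    exact hc s (mem_range.mp hs)
  have hQ : ∀ t ≤ m, ∑ s ∈ range t, c s = ∑ s ∈ range (m - t), c s := by
    intro t ht
    have hsplit : ∑ s ∈ range t, c s + ∑ s ∈ range (m - t), c (t + s)
        = ∑ s ∈ range m, c s := by
      rw [← Finset.sum_range_add, show t + (m - t) = m by omega]
    have hrefl : ∑ s ∈ range (m - t), c (t + s) = -∑ s ∈ range (m - t), c s := by
      rw [← Finset.sum_range_reflect (fun s => c (t + s)) (m - t), ← Finset.sum_neg_distrib]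
      apply Finset.sum_congr rfl
      intro s hs
      have hs' := mem_range.mp hs
      have e : t + (m - t - 1 - s) = m - 1 - s := by omega
      simp only [e]
      exact eq_neg_of_add_eq_zero_right (hc s (by omega))
    rw [hrefl, hW] at hsplit
    linear_combination hsplit
  have hP : ∀ t ≤ m + 1, ∑ s ∈ range t, b s = ∑ s ∈ range (m + 1 - t), b s := by
    intro t ht
    have hsplit : ∑ s ∈ range t, b s + ∑ s ∈ range (m + 1 - t), b (t + s)
        = ∑ s ∈ range (m+1), b s := by
      rw [← Finset.sum_range_add, show t + (m + 1 - t) = m + 1 by omega]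
    have hrefl : ∑ s ∈ range (m + 1 - t), b (t + s) = -∑ s ∈ range (m + 1 - t), b s := by
      rw [← Finset.sum_range_reflect (fun s => b (t + s)) (m + 1 - t), ← Finset.sum_neg_distrib]
      apply Finset.sum_congr rfl
      intro s hs
      have hs' := mem_range.mp hs
      have e : t + (m + 1 - t - 1 - s) = m - s := by omega
      simp only [e]
      exact eq_neg_of_add_eq_zero_right (hb1 s (by omega))
    rw [hrefl, hU] at hsplit
    linear_combination hsplit
  have hB : ∑ i ∈ range (m+1), b i * (∑ s ∈ range i, c s) = 0 := by
    apply half_zero'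
    nth_rewrite 2 [← Finset.sum_range_reflect]
    rw [← Finset.sum_add_distrib]
    apply Finset.sum_eq_zero
    intro i hi
    have hi' : i ≤ m := by have := mem_range.mp hi; omega
    have e : m + 1 - 1 - i = m - i := by omega
    simp only [e]
    rw [← hQ i hi']
    have h := hb1 i hi'
    linear_combination (∑ s ∈ range i, c s) * h
  have hC : ∑ s ∈ range m, c s * (∑ j ∈ range (s+1), b j) = 0 := by
    apply half_zero'
    nth_rewrite 2 [← Finset.sum_range_reflect]
    rw [← Finset.sum_add_distrib]
    apply Finset.sum_eq_zero
    intro s hs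
    have hs' := mem_range.mp hs
    have e : m - 1 - s + 1 = m - s := by omega
    simp only [e]
    have e2 : ∑ j ∈ range (m - s), b j = ∑ j ∈ range (s+1), b j := by
      rw [hP (m - s) (by omega), show m + 1 - (m - s) = s + 1 by omega]
    rw [e2]
    have h := hc s hs'
    linear_combination (∑ j ∈ range (s+1), b j) * h
  have hsplit : ∑ i ∈ range (2*m+1), ∑ j ∈ range (2*m+1-i), b i * b j
      = ∑ i ∈ range (m+1), ∑ j ∈ range (2*m+1-i), b i * b j
        + ∑ s ∈ range m, ∑ j ∈ range (2*m+1-(m+1+s)), b (m+1+s) * b j := by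
    rw [← Finset.sum_range_add, show m + 1 + m = 2*m+1 by omega]
  have part1 : ∀ i ∈ range (m+1), ∑ j ∈ range (2*m+1-i), b i * b j
      = (∑ j ∈ range (m+1), b i * b j) + b i * ∑ s ∈ range i, c s := by
    intro i hi
    have hi' : i ≤ m := by have := mem_range.mp hi; omega
    have e : 2*m+1-i = (m+1) + (m-i) := by omega
    rw [e, Finset.sum_range_add]
    congr 1
    rw [hQ i hi', Finset.mul_sum]
  have part2 : ∀ s ∈ range m, ∑ j ∈ range (2*m+1-(m+1+s)), b (m+1+s) * b j
      = c s * ∑ j ∈ range (s+1), b j := by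
    intro s hs
    have hs' := mem_range.mp hs
    have e : 2*m+1-(m+1+s) = m - s := by omega
    rw [e, ← Finset.mul_sum]
    have e2 : ∑ j ∈ range (m - s), b j = ∑ j ∈ range (s+1), b j := by
      rw [hP (m - s) (by omega), show m + 1 - (m - s) = s + 1 by omega]
    rw [e2]
  have hA : ∑ i ∈ range (m+1), ∑ j ∈ range (m+1), b i * b j = 0 := by
    rw [← Finset.sum_mul_sum, hU, zero_mul]
  rw [hsplit, Finset.sum_congr rfl part1, Finset.sum_congr rfl part2,
    Finset.sum_add_distrib, hA, hB, hC]
  ring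

theorem stmt_0 (n : ℕ) (hn : 0 < n) (hodd : Odd n) (a : ℕ → Polynomial ℚ)
    (h1 : ∀ k, k ≤ (n - 1) / 2 →
      Polynomial.cyclotomic n ℚ ∣ (a k + a ((n - 1) / 2 - k)))
    (h2 : ∀ k, (n + 1) / 2 ≤ k → k ≤ n - 1 →
      Polynomial.cyclotomic n ℚ ∣ (a k + a ((3 * n - 1) / 2 - k))) :
    Polynomial.cyclotomic n ℚ ∣ ∑ i ∈ range n, ∑ j ∈ range (n - i), a i * a j := by
  obtain ⟨m, hm⟩ := hodd
  have hm' : n = 2*m+1 := by omega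
  subst hm'
  rw [← Ideal.Quotient.eq_zero_iff_dvd]
  simp only [map_sum, map_mul]
  set φ := Ideal.Quotient.mk (Ideal.span {Polynomial.cyclotomic (2*m+1) ℚ}) with hφ
  have hb1 : ∀ k ≤ m, φ (a k) + φ (a (m - k)) = 0 := by
    intro k hk
    have h := h1 k (by omega)
    have e : (2*m+1 - 1) / 2 = m := by omega
    rw [e] at h
    rw [← map_add]
    exact (Ideal.Quotient.eq_zero_iff_dvd _ _).mpr h
  have hb2 : ∀ s < m, φ (a (m + 1 + s)) + φ (a (2 * m - s)) = 0 := by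
    intro s hs
    have h := h2 (m + 1 + s) (by omega) (by omega)
    have e : (3 * (2*m+1) - 1) / 2 - (m + 1 + s) = 2 * m - s := by omega
    rw [e] at h
    rw [← map_add]
    exact (Ideal.Quotient.eq_zero_iff_dvd _ _).mpr h
  exact main_lemma' m (fun k => φ (a k)) hb1 hb2
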